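/- Let f₀ be a probability density on ℝ and let f_j for j ≥ 0 be defined iteratively by f_0 = f₀ and f_{j+1} = f₀ − (φ_σ * f_j − f_j). Then for every j ≥ 0, f_j = Σ_{i=0}^{j} (−1)^i · C(j+1, i+1) · φ_σ^{(i)} * f₀, where φ_σ^{(i)} * f₀ denotes the i-fold convolution of φ_σ with f₀ (with the convention that the 0-fold convolution is f₀ itself). -/

import Mathlib

open MeasureTheory Real Set

/-- Gaussian density with mean 0 and standard deviation σ. -/
noncomputable def gauss (σ t : ℝ) : ℝ :=
  (Real.sqrt (2 * Real.pi) * σ)⁻¹ * Real.exp (-(t ^ 2) / (2 * σ ^ 2))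

/-- Convolution of the Gaussian kernel `gauss σ` with a function `g`. -/
noncomputable def gconv (σ : ℝ) (g : ℝ → ℝ) : ℝ → ℝ :=
  fun y => ∫ t, gauss σ (y - t) * g t

lemma gauss_cont (σ : ℝ) : Continuous (gauss σ) := by
  unfold gauss; fun_prop

lemma gauss_nonneg (σ : ℝ) (hσ : 0 < σ) (t : ℝ) : 0 ≤ gauss σ t := by
  unfold gauss
  positivity

lemma gauss_le (σ : ℝ) (hσ : 0 < σ) (t : ℝ) : gauss σ t ≤ (Real.sqrt (2 * Real.pi) * σ)⁻¹ := by
  unfold gauss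
  have h1 : Real.exp (-(t ^ 2) / (2 * σ ^ 2)) ≤ 1 := by
    apply Real.exp_le_one_iff.mpr
    refine div_nonpos_of_nonpos_of_nonneg (by nlinarith [sq_nonneg t]) (by positivity)
  calc (Real.sqrt (2 * Real.pi) * σ)⁻¹ * Real.exp (-(t ^ 2) / (2 * σ ^ 2))
      ≤ (Real.sqrt (2 * Real.pi) * σ)⁻¹ * 1 := by
        apply mul_le_mul_of_nonneg_left h1; positivity
    _ = (Real.sqrt (2 * Real.pi) * σ)⁻¹ := mul_one _

lemma gauss_integrable (σ : ℝ) (hσ : 0 < σ) : Integrable (gauss σ) := by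
  unfold gauss
  apply Integrable.const_mul
  have hb : (0:ℝ) < (2 * σ ^ 2)⁻¹ := by positivity
  have := integrable_exp_neg_mul_sq hb
  convert this using 2 with t
  ring

lemma gconv_eq_conv (σ : ℝ) (g : ℝ → ℝ) :
    gconv σ g = convolution (gauss σ) g (ContinuousLinearMap.mul ℝ ℝ) volume := by
  funext y
  unfold gconv convolution
  simp only [ContinuousLinearMap.mul_apply']
  rw [← integral_sub_left_eq_self (fun t => gauss σ t * g (y - t)) volume y]
  simp

lemma gconv_integrable (σ : ℝ) (hσ : 0 < σ) (g : ℝ → ℝ) (hg : Integrable g) :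
    Integrable (gconv σ g) := by
  rw [gconv_eq_conv]
  exact (gauss_integrable σ hσ).integrable_convolution _ hg

lemma gauss_mul_integrable (σ : ℝ) (hσ : 0 < σ) (g : ℝ → ℝ) (hg : Integrable g) (y : ℝ) :
    Integrable (fun t => gauss σ (y - t) * g t) := by
  apply hg.bdd_mul (c := (Real.sqrt (2 * Real.pi) * σ)⁻¹)
  · exact ((gauss_cont σ).comp (continuous_const.sub continuous_id)).aestronglyMeasurable
  · refine Filter.Eventually.of_forall fun t => ?_
    rw [Real.norm_eq_abs, abs_of_nonneg (gauss_nonneg σ hσ _)]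
    exact gauss_le σ hσ _


/-- closed form of the Kruijer–Rousseau–van der Vaart iterates:
`f_j = Σ_{i=0}^{j} (−1)^i C(j+1, i+1) φ_σ^{(i)} * f₀`. -/
theorem stmt_5 (σ : ℝ) (hσ : 0 < σ) (f₀ : ℝ → ℝ) (hf₀ : ∀ t, 0 ≤ f₀ t)
    (hint : Integrable f₀) (hdens : ∫ t, f₀ t = 1)
    (f : ℕ → ℝ → ℝ) (h0 : f 0 = f₀)
    (hrec : ∀ j, f (j + 1) = f₀ - (gconv σ (f j) - f j)) :
    ∀ j, f j = ∑ i ∈ Finset.range (j + 1),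
      ((-1 : ℝ) ^ i * ((j + 1).choose (i + 1) : ℝ)) • ((gconv σ)^[i] f₀) := by
  set G : ℕ → ℝ → ℝ := fun i => (gconv σ)^[i] f₀ with hG
  have hGsucc : ∀ i, G (i + 1) = gconv σ (G i) := by
    intro i
    simp [hG, Function.iterate_succ_apply']
  have hGint : ∀ i, Integrable (G i) := by
    intro i
    induction i with
    | zero => simpa [hG] using hint
    | succ n ih => rw [hGsucc]; exact gconv_integrable σ hσ _ ih
  intro j
  induction j with
  | zero =>
    funext y
    simp [h0, hG]
  | succ j ih =>
    replace ih : f j = ∑ i ∈ Finset.range (j + 1),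
        ((-1 : ℝ) ^ i * ((j + 1).choose (i + 1) : ℝ)) • G i := ih
    show f (j + 1) = ∑ i ∈ Finset.range (j + 1 + 1),
        ((-1 : ℝ) ^ i * ((j + 1 + 1).choose (i + 1) : ℝ)) • G i
    have hconv : ∀ y, gconv σ (f j) y
        = ∑ i ∈ Finset.range (j + 1),
          ((-1 : ℝ) ^ i * ((j + 1).choose (i + 1) : ℝ)) * G (i + 1) y := by
      intro y
      rw [ih]
      unfold gconv
      have h1 : ∀ t, gauss σ (y - t) * ((∑ i ∈ Finset.range (j + 1),
          ((-1 : ℝ) ^ i * ((j + 1).choose (i + 1) : ℝ)) • G i) t)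
          = ∑ i ∈ Finset.range (j + 1),
            gauss σ (y - t) * (((-1 : ℝ) ^ i * ((j + 1).choose (i + 1) : ℝ)) * G i t) := by
        intro t
        simp only [Finset.sum_apply, Pi.smul_apply, smul_eq_mul, Finset.mul_sum]
      simp only [h1]
      rw [integral_finset_sum]
      · refine Finset.sum_congr rfl fun i _ => ?_
        rw [hGsucc]
        unfold gconv
        rw [← integral_const_mul]
        congr 1; funext t; ring_nf
      · intro i _
        exact gauss_mul_integrable σ hσ _ (((hGint i).const_mul _)) y
    funext y
    rw [hrec j]
    simp only [Pi.sub_apply]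
    rw [hconv y, ih]
    simp only [Finset.sum_apply, Pi.smul_apply, smul_eq_mul]
    -- now a real-number identity between finite sums
    rw [Finset.sum_range_succ' (fun i => ((-1 : ℝ) ^ i * ((j + 1 + 1).choose (i + 1) : ℝ)) * G i y)]
    rw [Finset.sum_range_succ' (fun i => ((-1 : ℝ) ^ i * ((j + 1).choose (i + 1) : ℝ)) * G i y)]
    rw [Finset.sum_range_succ (fun i => ((-1 : ℝ) ^ i * ((j + 1).choose (i + 1) : ℝ)) * G (i + 1) y)]
    rw [Finset.sum_range_succ (fun i => ((-1 : ℝ) ^ (i+1) * ((j + 1 + 1).choose (i + 1 + 1) : ℝ)) * G (i+1) y)]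
    have hkey : ∀ i ∈ Finset.range j,
        ((-1 : ℝ) ^ (i + 1) * ((j + 1).choose (i + 1 + 1) : ℝ)) * G (i + 1) y
        - ((-1 : ℝ) ^ i * ((j + 1).choose (i + 1) : ℝ)) * G (i + 1) y
        = ((-1 : ℝ) ^ (i + 1) * ((j + 1 + 1).choose (i + 1 + 1) : ℝ)) * G (i + 1) y := by
      intro i _
      rw [Nat.choose_succ_succ (j+1) (i+1)]
      push_cast
      ring
    have hsum : ∑ i ∈ Finset.range j,
        ((-1 : ℝ) ^ (i + 1) * ((j + 1 + 1).choose (i + 1 + 1) : ℝ)) * G (i + 1) y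
        = ∑ i ∈ Finset.range j,
          (((-1 : ℝ) ^ (i + 1) * ((j + 1).choose (i + 1 + 1) : ℝ)) * G (i + 1) y
           - ((-1 : ℝ) ^ i * ((j + 1).choose (i + 1) : ℝ)) * G (i + 1) y) := by
      exact (Finset.sum_congr rfl hkey).symm
    rw [hsum, Finset.sum_sub_distrib]
    have h0y : G 0 y = f₀ y := by simp [hG]
    simp only [h0y, Nat.choose_self, Nat.choose_one_right, pow_succ, zero_add]
    push_cast
    ring
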